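/- Let A ∈ GL(d, ℝ) be expansive. Let 𝒟_A = {A^i([0,1]^d + k) : i ∈ ℤ, k ∈ ℤ^d} be the collection of dilated cubes, scale(A^i([0,1]^d+k)) = i, and for D ∈ 𝒟_A let 𝒯(D) = {D' ∈ 𝒟_A : m(D' ∩ D) > 0 and scale(D') ≤ scale(D)}. Then there exists N = N(A,d) ∈ ℕ such that for all D ∈ 𝒟_A: ⋃_{D' ∈ 𝒯(D)} D' ⊆ ⋃_{n ∈ ℤ^d, |n| ≤ N} (D + A^{scale(D)} n). -/

import Mathlib

open MeasureTheory
open scoped Pointwise ENNReal Classical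

/-- A real matrix is expansive if it is invertible and all its complex eigenvalues
have absolute value strictly greater than `1`. -/
def Expansive {d : ℕ} (A : Matrix (Fin d) (Fin d) ℝ) : Prop :=
  IsUnit A ∧ ∀ μ ∈ spectrum ℂ (A.map (algebraMap ℝ ℂ)), 1 < ‖μ‖

/-- The action of a matrix on Euclidean space. -/
def ms {d : ℕ} (A : Matrix (Fin d) (Fin d) ℝ) (x : EuclideanSpace ℝ (Fin d)) :
    EuclideanSpace ℝ (Fin d) := WithLp.toLp 2 (A.mulVec x)

/-- The integer vector `n` regarded as a point of Euclidean space. -/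
def zvec {d : ℕ} (n : Fin d → ℤ) : EuclideanSpace ℝ (Fin d) := WithLp.toLp 2 (fun t => (n t : ℝ))

/-- The dilated cube `A^i ([0,1]^d + k)`. -/
def dcube {d : ℕ} (A : Matrix (Fin d) (Fin d) ℝ) (i : ℤ) (k : Fin d → ℤ) :
    Set (EuclideanSpace ℝ (Fin d)) :=
  ms (A ^ i) '' {x | ∀ t, (k t : ℝ) ≤ x t ∧ x t ≤ (k t : ℝ) + 1}

namespace StmtAux
variable {d : ℕ}

lemma ms_ms (M N : Matrix (Fin d) (Fin d) ℝ) (x : EuclideanSpace ℝ (Fin d)) :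
    ms M (ms N x) = ms (M * N) x := by
  simp [ms, Matrix.mulVec_mulVec]

lemma ms_one (x : EuclideanSpace ℝ (Fin d)) : ms (1 : Matrix (Fin d) (Fin d) ℝ) x = x := by
  ext t
  simp [ms]

lemma ms_sub (M : Matrix (Fin d) (Fin d) ℝ) (x y : EuclideanSpace ℝ (Fin d)) :
    ms M (x - y) = ms M x - ms M y := by
  ext t
  simp [ms, Matrix.mulVec_sub]

lemma norm_le_sqrt (v : EuclideanSpace ℝ (Fin d)) {c : ℝ} (hc : 0 ≤ c) (h : ∀ t, |v t| ≤ c) :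
    ‖v‖ ≤ c * Real.sqrt d := by
  rw [EuclideanSpace.norm_eq]
  have h1 : ∑ t, ‖v t‖ ^ 2 ≤ ∑ _t : Fin d, c ^ 2 := by
    refine Finset.sum_le_sum fun t _ => ?_
    rw [Real.norm_eq_abs]
    exact pow_le_pow_left₀ (abs_nonneg _) (h t) 2
  have h2 : ∑ _t : Fin d, c ^ 2 = (d : ℝ) * c ^ 2 := by
    simp [Finset.sum_const, mul_comm]
  calc Real.sqrt (∑ t, ‖v t‖ ^ 2) ≤ Real.sqrt ((d : ℝ) * c ^ 2) := by
        apply Real.sqrt_le_sqrt; rw [← h2]; exact h1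
    _ = c * Real.sqrt d := by
        rw [Real.sqrt_mul (by positivity), Real.sqrt_sq hc, mul_comm]

-- complexification
def cx (x : EuclideanSpace ℝ (Fin d)) : EuclideanSpace ℂ (Fin d) := WithLp.toLp 2 (fun t => (x t : ℂ))

lemma norm_cx (x : EuclideanSpace ℝ (Fin d)) : ‖cx x‖ = ‖x‖ := by
  rw [EuclideanSpace.norm_eq, EuclideanSpace.norm_eq]
  congr 1
  refine Finset.sum_congr rfl fun t _ => ?_
  simp [cx]

lemma toCLM_cx (M : Matrix (Fin d) (Fin d) ℝ) (x : EuclideanSpace ℝ (Fin d)) :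
    Matrix.toEuclideanCLM (𝕜 := ℂ) (M.map (algebraMap ℝ ℂ)) (cx x) = cx (ms M x) := by
  ext t
  have h := Matrix.ofLp_toEuclideanCLM (M.map (algebraMap ℝ ℂ)) (cx x)
  have h2 : (Matrix.toEuclideanCLM (𝕜 := ℂ) (M.map (algebraMap ℝ ℂ)) (cx x)) t
      = ((M.map (algebraMap ℝ ℂ)).mulVec (cx x)) t := by
    exact congrFun h t
  rw [h2]
  have := RingHom.map_mulVec (algebraMap ℝ ℂ) M (x : Fin d → ℝ) t
  simpa [cx, ms, Function.comp_def] using this.symm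


lemma expansive_bound (A : Matrix (Fin d) (Fin d) ℝ) (hA : Expansive A) :
    ∃ C : ℝ, 1 ≤ C ∧ ∀ (n : ℕ) (x : EuclideanSpace ℝ (Fin d)), ‖ms (A⁻¹ ^ n) x‖ ≤ C * ‖x‖ := by
  classical
  rcases Nat.eq_zero_or_pos d with hd | hd
  · refine ⟨1, le_refl 1, fun n x => ?_⟩
    subst hd
    have : ‖ms (A⁻¹ ^ n) x‖ = 0 := by
      rw [EuclideanSpace.norm_eq]
      simp
    rw [this, one_mul]
    exact norm_nonneg x
  have hdet : IsUnit A.det := (Matrix.isUnit_iff_isUnit_det A).mp hA.1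
  haveI : Nontrivial (EuclideanSpace ℂ (Fin d)) := by
    apply Module.nontrivial_of_finrank_pos (R := ℂ)
    rw [finrank_euclideanSpace]
    simpa using hd
  set f := algebraMap ℝ ℂ with hf
  set Ac := A.map f with hAc
  set Bc := (A⁻¹).map f with hBc
  have hmap1 : (1 : Matrix (Fin d) (Fin d) ℝ).map f = 1 :=
    Matrix.map_one f (map_zero f) (map_one f)
  have hmul1 : Ac * Bc = 1 := by
    rw [hAc, hBc, ← Matrix.map_mul, Matrix.mul_nonsing_inv A hdet, hmap1]
  have hmul2 : Bc * Ac = 1 := by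
    rw [hAc, hBc, ← Matrix.map_mul, Matrix.nonsing_inv_mul A hdet, hmap1]
  set φ := Matrix.toEuclideanCLM (𝕜 := ℂ) (n := Fin d) with hφ
  set uT : (EuclideanSpace ℂ (Fin d) →L[ℂ] EuclideanSpace ℂ (Fin d))ˣ :=
    ⟨φ Ac, φ Bc, by rw [← map_mul, hmul1, map_one], by rw [← map_mul, hmul2, map_one]⟩ with huT
  have hspec : ∀ μ ∈ spectrum ℂ (φ Bc), ‖μ‖₊ < 1 := by
    intro μ hμ
    have hBc_unit : IsUnit (φ Bc) := ⟨uT⁻¹, rfl⟩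
    have hμ0 : μ ≠ 0 := by
      rintro rfl
      exact (spectrum.zero_notMem_iff ℂ).mpr hBc_unit hμ
    set rμ : ℂˣ := Units.mk0 μ hμ0 with hrμ
    have hmem0 : ((rμ : ℂˣ) : ℂ) ∈ spectrum ℂ
        ((↑uT⁻¹ : EuclideanSpace ℂ (Fin d) →L[ℂ] EuclideanSpace ℂ (Fin d))) := hμ
    have hmem : ((rμ⁻¹ : ℂˣ) : ℂ) ∈ spectrum ℂ
        ((↑uT : EuclideanSpace ℂ (Fin d) →L[ℂ] EuclideanSpace ℂ (Fin d))) := by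
      rw [spectrum.inv_mem_iff, inv_inv]
      exact hmem0
    have hAc_spec : ((rμ⁻¹ : ℂˣ) : ℂ) ∈ spectrum ℂ Ac := by
      have heq : spectrum ℂ (φ Ac) = spectrum ℂ Ac := AlgEquiv.spectrum_eq φ Ac
      exact heq ▸ hmem
    have habs := hA.2 _ hAc_spec
    have h1 : 1 < ‖μ‖⁻¹ := by
      have hcoe : ((rμ⁻¹ : ℂˣ) : ℂ) = μ⁻¹ := by simp [hrμ]
      rwa [hcoe, norm_inv] at habs
    have h2 : ‖μ‖ < 1 := (one_lt_inv_iff₀.mp h1).2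
    have h3 : ‖μ‖ < 1 := by exact h2
    rwa [← NNReal.coe_lt_coe, coe_nnnorm, NNReal.coe_one]
  have hrad : spectralRadius ℂ (φ Bc) < 1 := by
    rcases Set.eq_empty_or_nonempty (spectrum ℂ (φ Bc)) with hS | hS
    · simpa [spectralRadius, hS] using zero_lt_one
    · obtain ⟨μ₀, hμ₀S, hmax⟩ :=
        (spectrum.isCompact (φ Bc)).exists_isMaxOn hS continuous_nnnorm.continuousOn
      calc spectralRadius ℂ (φ Bc) ≤ (‖μ₀‖₊ : ℝ≥0∞) := by
            rw [spectralRadius]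
            exact iSup₂_le fun k hk => ENNReal.coe_le_coe.mpr (hmax hk)
        _ < 1 := by exact_mod_cast hspec μ₀ hμ₀S
  have htend := spectrum.pow_nnnorm_pow_one_div_tendsto_nhds_spectralRadius (φ Bc)
  have hev : ∀ᶠ n : ℕ in Filter.atTop,
      ((‖(φ Bc) ^ n‖₊ : ℝ≥0∞)) ^ (1/(n:ℝ)) < 1 := htend.eventually_lt_const hrad
  obtain ⟨n₀, hn₀⟩ := Filter.eventually_atTop.mp hev
  set n₁ := max n₀ 1 with hn₁
  have hb : ∀ n, n₁ ≤ n → ‖(φ Bc) ^ n‖ ≤ 1 := by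
    intro n hn
    have hnn : 1 ≤ n := le_trans (le_max_right _ _) hn
    have h1 := hn₀ n (le_trans (le_max_left _ _) hn)
    by_contra hcon
    push_neg at hcon
    have h2 : (1 : ℝ≥0∞) ≤ (‖(φ Bc) ^ n‖₊ : ℝ≥0∞) := by
      rw [← ENNReal.coe_one, ENNReal.coe_le_coe, ← NNReal.coe_le_coe, coe_nnnorm, NNReal.coe_one]
      exact hcon.le
    have hz : (0:ℝ) < 1/(n:ℝ) := by
      apply one_div_pos.mpr
      exact_mod_cast hnn
    exact absurd h1 (not_lt.mpr (ENNReal.one_le_rpow h2 hz))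
  set C : ℝ := 1 + ∑ j ∈ Finset.range n₁, ‖(φ Bc) ^ j‖ with hC
  have hsum_nonneg : 0 ≤ ∑ j ∈ Finset.range n₁, ‖(φ Bc) ^ j‖ :=
    Finset.sum_nonneg fun j _ => norm_nonneg _
  have hC1 : 1 ≤ C := by rw [hC]; linarith
  have hCn : ∀ n, ‖(φ Bc) ^ n‖ ≤ C := by
    intro n
    rcases le_or_gt n₁ n with h | h
    · exact le_trans (hb n h) hC1
    · have := Finset.single_le_sum (f := fun j => ‖(φ Bc) ^ j‖)
        (fun j _ => norm_nonneg _) (Finset.mem_range.mpr h)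
      rw [hC]; linarith
  refine ⟨C, hC1, fun n x => ?_⟩
  have hBcpow : Bc ^ n = ((A⁻¹) ^ n).map f := by
    rw [hBc]
    simp only [← RingHom.mapMatrix_apply, ← map_pow]
  have key : ‖ms (A⁻¹ ^ n) x‖ = ‖((φ Bc) ^ n) (cx x)‖ := by
    rw [← map_pow, hBcpow, toCLM_cx, norm_cx]
  rw [key]
  calc ‖((φ Bc) ^ n) (cx x)‖ ≤ ‖(φ Bc) ^ n‖ * ‖cx x‖ :=
        ContinuousLinearMap.le_opNorm _ _
    _ ≤ C * ‖x‖ := by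
        rw [norm_cx]
        exact mul_le_mul_of_nonneg_right (hCn n) (norm_nonneg x)

end StmtAux

/-- Tent-cover lemma: there is `N = N(A,d)` such that for every dilated cube
`D = A^i([0,1]^d + k)`, the union of all cubes in the tent over `D` is contained in
`⋃_{|n| ≤ N} (D + A^i n)`. -/
theorem stmt11 {d : ℕ} (A : Matrix (Fin d) (Fin d) ℝ) (hA : Expansive A) :
    ∃ N : ℕ, ∀ (i : ℤ) (k : Fin d → ℤ) (i' : ℤ) (k' : Fin d → ℤ),
      i' ≤ i → 0 < volume (dcube A i' k' ∩ dcube A i k) →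
      dcube A i' k' ⊆
        ⋃ n ∈ {n : Fin d → ℤ | ‖zvec n‖ ≤ (N : ℝ)},
          (fun y => y + ms (A ^ i) (zvec n)) '' dcube A i k := by
  obtain ⟨C, hC1, hC⟩ := StmtAux.expansive_bound A hA
  have hdet : IsUnit A.det := (Matrix.isUnit_iff_isUnit_det A).mp hA.1
  refine ⟨⌈(C + 2) * Real.sqrt d⌉₊, fun i k i' k' hle hvol => ?_⟩
  rintro x ⟨p, hp, rfl⟩
  obtain ⟨z, hz', hz⟩ := nonempty_of_measure_ne_zero hvol.ne'
  obtain ⟨q, hq, hzq⟩ := hz'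
  obtain ⟨w, hw, hzw⟩ := hz
  set j := i' - i with hj
  set m := (-j).toNat with hm
  have hjm : j = -(m : ℤ) := by
    have := Int.toNat_of_nonneg (by omega : (0:ℤ) ≤ -j)
    omega
  have hAj : A ^ j = A⁻¹ ^ m := by
    rw [hjm, Matrix.zpow_neg_natCast, Matrix.inv_pow']
  set u := ms (A ^ j) p with hu
  have hexp : i + j = i' := by omega
  have hxu : ms (A ^ i') p = ms (A ^ i) u := by
    rw [hu, StmtAux.ms_ms, ← Matrix.zpow_add hdet, hexp]
  have hcancel : ∀ y : EuclideanSpace ℝ (Fin d), ms (A ^ (-i)) (ms (A ^ i) y) = y := by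
    intro y
    rw [StmtAux.ms_ms, ← Matrix.zpow_add hdet, neg_add_cancel, zpow_zero, StmtAux.ms_one]
  have hw2 : ms (A ^ j) q = w := by
    have h1 : ms (A ^ i) (ms (A ^ j) q) = ms (A ^ i) w := by
      rw [StmtAux.ms_ms, ← Matrix.zpow_add hdet, hexp, hzq, hzw]
    have h2 := congrArg (ms (A ^ (-i))) h1
    rwa [hcancel, hcancel] at h2
  have hpq : ‖p - q‖ ≤ Real.sqrt d := by
    have := StmtAux.norm_le_sqrt (p - q) zero_le_one (fun t => by
      have h1 := (hp t).1; have h2 := (hp t).2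
      have h3 := (hq t).1; have h4 := (hq t).2
      have h5 : (p - q) t = p t - q t := rfl
      rw [h5, abs_le]
      constructor <;> linarith)
    rw [one_mul] at this
    exact this
  have huw : ‖u - w‖ ≤ C * Real.sqrt d := by
    rw [← hw2, ← StmtAux.ms_sub, hAj]
    calc ‖ms (A⁻¹ ^ m) (p - q)‖ ≤ C * ‖p - q‖ := hC m _
      _ ≤ C * Real.sqrt d := mul_le_mul_of_nonneg_left hpq (by linarith)
  set nn : Fin d → ℤ := fun t => ⌊u t⌋ - k t with hnn
  have hnorm_nn : ‖zvec nn‖ ≤ ((⌈(C + 2) * Real.sqrt d⌉₊ : ℕ) : ℝ) := by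
    have he : ∀ t, |(zvec nn - (u - w)) t| ≤ 2 := by
      intro t
      have h1 := Int.floor_le (u t)
      have h2 := Int.lt_floor_add_one (u t)
      have h3 := (hw t).1
      have h4 := (hw t).2
      have h5 : (zvec nn - (u - w)) t = ((⌊u t⌋ : ℝ) - (k t : ℝ)) - (u t - w t) := by
        have : (zvec nn) t = ((⌊u t⌋ : ℝ) - (k t : ℝ)) := by
          simp [zvec, hnn]
        have hsub : (zvec nn - (u - w)) t = (zvec nn) t - (u t - w t) := rfl
        rw [hsub, this]
      rw [h5, abs_le]
      constructor <;> linarith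
    have hE : ‖zvec nn - (u - w)‖ ≤ 2 * Real.sqrt d :=
      StmtAux.norm_le_sqrt _ (by norm_num) he
    have hdecomp : zvec nn = (u - w) + (zvec nn - (u - w)) := by abel
    have hadd := norm_add_le (u - w) (zvec nn - (u - w))
    rw [← hdecomp] at hadd
    calc ‖zvec nn‖ ≤ ‖u - w‖ + ‖zvec nn - (u - w)‖ := hadd
      _ ≤ C * Real.sqrt d + 2 * Real.sqrt d := add_le_add huw hE
      _ = (C + 2) * Real.sqrt d := by ring
      _ ≤ _ := Nat.le_ceil _
  refine Set.mem_iUnion₂.mpr ⟨nn, hnorm_nn, ?_⟩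
  refine ⟨ms (A ^ i) (u - zvec nn), ⟨u - zvec nn, fun t => ?_, rfl⟩, ?_⟩
  · have h1 := Int.floor_le (u t)
    have h2 := Int.lt_floor_add_one (u t)
    have h5 : (u - zvec nn) t = u t - ((⌊u t⌋ : ℝ) - (k t : ℝ)) := by
      have : (zvec nn) t = ((⌊u t⌋ : ℝ) - (k t : ℝ)) := by simp [zvec, hnn]
      have hsub : (u - zvec nn) t = u t - (zvec nn) t := rfl
      rw [hsub, this]
    rw [h5]
    constructor <;> linarith
  · show ms (A ^ i) (u - zvec nn) + ms (A ^ i) (zvec nn) = ms (A ^ i') p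
    rw [StmtAux.ms_sub, sub_add_cancel, ← hxu]
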